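/- If G is a finite solvable group and A, B are nonempty subsets of G with |A|+|B|-1 ≤ p(G), then |A·B| ≥ |A|+|B|-1. -/

import Mathlib

open Pointwise

/-- `p(G)`: the smallest prime divisor of `|G|`, or `∞` if `G` is trivial. -/
noncomputable def pMul (G : Type*) [Group G] : ℕ∞ :=
  if Nat.card G = 1 then ⊤ else (Nat.card G).minFac

lemma pMul_le_minOrder (G : Type*) [Group G] [Fintype G] :
    pMul G ≤ Monoid.minOrder G := by
  rw [Monoid.le_minOrder]
  intro a ha _
  unfold pMul
  split_ifs with h1
  · have : Subsingleton G := (Nat.card_eq_one_iff_unique.mp h1).1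
    exact absurd (Subsingleton.elim a 1) ha
  · have hdvd : orderOf a ∣ Nat.card G := orderOf_dvd_natCard a
    have h2 : orderOf a ≠ 1 := by simpa using ha
    have : (Nat.card G).minFac ≤ orderOf a :=
      Nat.minFac_le_of_dvd ((Nat.two_le_iff _).mpr ⟨orderOf_pos a |>.ne', h2⟩) hdvd
    exact_mod_cast this

theorem cauchy_davenport_solvable (G : Type*) [Group G] [Fintype G]
    [DecidableEq G] [Group.IsSolvable G] (A B : Finset G) (hA : A.Nonempty)
    (hB : B.Nonempty) (h : ((A.card + B.card - 1 : ℕ) : ℕ∞) ≤ pMul G) :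
    A.card + B.card - 1 ≤ (A * B).card := by
  have key := cauchy_davenport_minOrder_mul hA hB
  have h' : ((A.card + B.card - 1 : ℕ) : ℕ∞) ≤ (A * B).card :=
    le_trans (le_min (h.trans (pMul_le_minOrder G)) le_rfl) key
  exact_mod_cast h'
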